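/- The following equalities of (finite) Lebesgue integrals hold: ∫_{ℝ²} dx dy / max(|x²+xy²|, |xy|, |xy+y³|, |x|, |x+y²|, 1, |y|) = 3·vol{(t,v,u) ∈ ℝ³ : 0 < |t(ut+v²)| ≤ 1, |uvt| ≤ 1, |uvt+v³| ≤ 1, |u²t| ≤ 1, |u²t+uv²| ≤ 1, 0 < u³ ≤ 1, |u²v| ≤ 1} = 6·∫_0^1 F2(u) du. -/

import Mathlib

open MeasureTheory Set
open scoped ENNReal Pointwise

noncomputable section

/-- `F₁(u,v)` is the Lebesgue measure of
`{t : 0 < |t(ut+v²)| ≤ 1, |uvt| ≤ 1, |uvt+v³| ≤ 1, |u²t| ≤ 1, |u²t+uv²| ≤ 1}`. -/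
def F1 (u v : ℝ) : ℝ :=
  (volume {t : ℝ |
    0 < |t * (u * t + v ^ 2)| ∧ |t * (u * t + v ^ 2)| ≤ 1 ∧
    |u * v * t| ≤ 1 ∧ |u * v * t + v ^ 3| ≤ 1 ∧
    |u ^ 2 * t| ≤ 1 ∧ |u ^ 2 * t + u * v ^ 2| ≤ 1}).toReal

/-- `F₂(u) = ∫_0^{1/u²} F₁(u,v) dv`. -/
def F2 (u : ℝ) : ℝ := ∫ v in (0:ℝ)..(1 / u ^ 2), F1 u v

namespace DensityAux

def S : Set (ℝ × ℝ × ℝ) := {q : ℝ × ℝ × ℝ |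
          0 < |q.1 * (q.2.2 * q.1 + q.2.1 ^ 2)| ∧ |q.1 * (q.2.2 * q.1 + q.2.1 ^ 2)| ≤ 1 ∧
          |q.2.2 * q.2.1 * q.1| ≤ 1 ∧ |q.2.2 * q.2.1 * q.1 + q.2.1 ^ 3| ≤ 1 ∧
          |q.2.2 ^ 2 * q.1| ≤ 1 ∧ |q.2.2 ^ 2 * q.1 + q.2.2 * q.2.1 ^ 2| ≤ 1 ∧
          0 < q.2.2 ^ 3 ∧ q.2.2 ^ 3 ≤ 1 ∧ |q.2.2 ^ 2 * q.2.1| ≤ 1}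

def Tset (u v : ℝ) : Set ℝ := {t : ℝ |
    0 < |t * (u * t + v ^ 2)| ∧ |t * (u * t + v ^ 2)| ≤ 1 ∧
    |u * v * t| ≤ 1 ∧ |u * v * t + v ^ 3| ≤ 1 ∧
    |u ^ 2 * t| ≤ 1 ∧ |u ^ 2 * t + u * v ^ 2| ≤ 1}

lemma F1_eq (u v : ℝ) : F1 u v = (volume (Tset u v)).toReal := rfl

def Slt : Set (ℝ × ℝ × ℝ) := {q : ℝ × ℝ × ℝ |
          q.1 * (q.2.2 * q.1 + q.2.1 ^ 2) ≠ 0 ∧ |q.1 * (q.2.2 * q.1 + q.2.1 ^ 2)| < 1 ∧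
          |q.2.2 * q.2.1 * q.1| < 1 ∧ |q.2.2 * q.2.1 * q.1 + q.2.1 ^ 3| < 1 ∧
          |q.2.2 ^ 2 * q.1| < 1 ∧ |q.2.2 ^ 2 * q.1 + q.2.2 * q.2.1 ^ 2| < 1 ∧
          0 < q.2.2 ∧ q.2.2 < 1 ∧ |q.2.2 ^ 2 * q.2.1| < 1}

def Mf (p : ℝ × ℝ) : ℝ :=
  max (max (max (max (max (max |p.1 ^ 2 + p.1 * p.2 ^ 2| |p.1 * p.2|)
          |p.1 * p.2 + p.2 ^ 3|) |p.1|) |p.1 + p.2 ^ 2|) 1) |p.2|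

def A0 (s : ℝ) : Set (ℝ × ℝ) := {p : ℝ × ℝ |
    ((((((s * |p.1 ^ 2 + p.1 * p.2 ^ 2| < 1 ∧ s * |p.1 * p.2| < 1) ∧
      s * |p.1 * p.2 + p.2 ^ 3| < 1) ∧ s * |p.1| < 1) ∧ s * |p.1 + p.2 ^ 2| < 1) ∧ s * 1 < 1) ∧
      s * |p.2| < 1)}

def Z : Set (ℝ × ℝ) := {p : ℝ × ℝ | p.1 * (p.1 + p.2 ^ 2) = 0}

def Aset (s : ℝ) : Set (ℝ × ℝ) := A0 s \ Z

section Measurability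

lemma measurableSet_S : MeasurableSet S := by
  have h1 : Measurable fun q : ℝ × ℝ × ℝ => |q.1 * (q.2.2 * q.1 + q.2.1 ^ 2)| := by fun_prop
  have h2 : Measurable fun q : ℝ × ℝ × ℝ => |q.2.2 * q.2.1 * q.1| := by fun_prop
  have h3 : Measurable fun q : ℝ × ℝ × ℝ => |q.2.2 * q.2.1 * q.1 + q.2.1 ^ 3| := by fun_prop
  have h4 : Measurable fun q : ℝ × ℝ × ℝ => |q.2.2 ^ 2 * q.1| := by fun_prop
  have h5 : Measurable fun q : ℝ × ℝ × ℝ => |q.2.2 ^ 2 * q.1 + q.2.2 * q.2.1 ^ 2| := by fun_prop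
  have h6 : Measurable fun q : ℝ × ℝ × ℝ => q.2.2 ^ 3 := by fun_prop
  have h7 : Measurable fun q : ℝ × ℝ × ℝ => |q.2.2 ^ 2 * q.2.1| := by fun_prop
  unfold S
  simp only [Set.setOf_and]
  exact (measurableSet_lt measurable_const h1).inter
    ((measurableSet_le h1 measurable_const).inter
    ((measurableSet_le h2 measurable_const).inter
    ((measurableSet_le h3 measurable_const).inter
    ((measurableSet_le h4 measurable_const).inter
    ((measurableSet_le h5 measurable_const).inter
    ((measurableSet_lt measurable_const h6).inter
    ((measurableSet_le h6 measurable_const).inter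
    (measurableSet_le h7 measurable_const))))))))

lemma measurableSet_Slt : MeasurableSet Slt := by
  have h0 : Measurable fun q : ℝ × ℝ × ℝ => q.1 * (q.2.2 * q.1 + q.2.1 ^ 2) := by fun_prop
  have h1 : Measurable fun q : ℝ × ℝ × ℝ => |q.1 * (q.2.2 * q.1 + q.2.1 ^ 2)| := by fun_prop
  have h2 : Measurable fun q : ℝ × ℝ × ℝ => |q.2.2 * q.2.1 * q.1| := by fun_prop
  have h3 : Measurable fun q : ℝ × ℝ × ℝ => |q.2.2 * q.2.1 * q.1 + q.2.1 ^ 3| := by fun_prop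
  have h4 : Measurable fun q : ℝ × ℝ × ℝ => |q.2.2 ^ 2 * q.1| := by fun_prop
  have h5 : Measurable fun q : ℝ × ℝ × ℝ => |q.2.2 ^ 2 * q.1 + q.2.2 * q.2.1 ^ 2| := by fun_prop
  have h6 : Measurable fun q : ℝ × ℝ × ℝ => q.2.2 := by fun_prop
  have h7 : Measurable fun q : ℝ × ℝ × ℝ => |q.2.2 ^ 2 * q.2.1| := by fun_prop
  unfold Slt
  simp only [Set.setOf_and]
  exact ((measurableSet_eq_fun h0 measurable_const).compl).inter
    ((measurableSet_lt h1 measurable_const).inter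
    ((measurableSet_lt h2 measurable_const).inter
    ((measurableSet_lt h3 measurable_const).inter
    ((measurableSet_lt h4 measurable_const).inter
    ((measurableSet_lt h5 measurable_const).inter
    ((measurableSet_lt measurable_const h6).inter
    ((measurableSet_lt h6 measurable_const).inter
    (measurableSet_lt h7 measurable_const))))))))

lemma measurableSet_A0 (s : ℝ) : MeasurableSet (A0 s) := by
  have h1 : Measurable fun p : ℝ × ℝ => s * |p.1 ^ 2 + p.1 * p.2 ^ 2| := by fun_prop
  have h2 : Measurable fun p : ℝ × ℝ => s * |p.1 * p.2| := by fun_prop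
  have h3 : Measurable fun p : ℝ × ℝ => s * |p.1 * p.2 + p.2 ^ 3| := by fun_prop
  have h4 : Measurable fun p : ℝ × ℝ => s * |p.1| := by fun_prop
  have h5 : Measurable fun p : ℝ × ℝ => s * |p.1 + p.2 ^ 2| := by fun_prop
  have h7 : Measurable fun p : ℝ × ℝ => s * |p.2| := by fun_prop
  unfold A0
  simp only [Set.setOf_and]
  exact ((((((measurableSet_lt h1 measurable_const).inter
    (measurableSet_lt h2 measurable_const)).inter
    (measurableSet_lt h3 measurable_const)).inter
    (measurableSet_lt h4 measurable_const)).inter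
    (measurableSet_lt h5 measurable_const)).inter
    (measurableSet_lt measurable_const measurable_const)).inter
    (measurableSet_lt h7 measurable_const)

lemma measurableSet_Z : MeasurableSet Z := by
  have h1 : Measurable fun p : ℝ × ℝ => p.1 * (p.1 + p.2 ^ 2) := by fun_prop
  exact measurableSet_eq_fun h1 measurable_const

lemma measurableSet_Aset (s : ℝ) : MeasurableSet (Aset s) :=
  (measurableSet_A0 s).diff measurableSet_Z

end Measurability

section Sections

lemma vol2_eq_integral_sections {T : Set (ℝ × ℝ)} (hT : MeasurableSet T) :
    volume T = ∫⁻ y : ℝ, volume {x : ℝ | (x, y) ∈ T} := by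
  rw [Measure.volume_eq_prod, Measure.prod_apply_symm hT]
  rfl

lemma vol3_eq_integral_sections {T : Set (ℝ × ℝ × ℝ)} (hT : MeasurableSet T) :
    volume T = ∫⁻ u : ℝ, volume {p : ℝ × ℝ | (p.1, p.2, u) ∈ T} := by
  have h0 : volume T = volume (MeasurableEquiv.prodAssoc ⁻¹' T) :=
    ((volume_preserving_prodAssoc (α₁ := ℝ) (β₁ := ℝ) (γ₁ := ℝ)).measure_preimage
      hT.nullMeasurableSet).symm
  rw [h0, Measure.volume_eq_prod,
    Measure.prod_apply_symm (MeasurableEquiv.prodAssoc.measurable hT)]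
  apply lintegral_congr
  intro u
  rfl

lemma vol3_eq_integral_tsections {T : Set (ℝ × ℝ × ℝ)} (hT : MeasurableSet T) :
    volume T = ∫⁻ p : ℝ × ℝ, volume {t : ℝ | (t, p.1, p.2) ∈ T} := by
  rw [Measure.volume_eq_prod, Measure.prod_apply_symm hT]
  apply lintegral_congr
  intro p
  rfl

lemma null3_of_tsections {T : Set (ℝ × ℝ × ℝ)} (hT : MeasurableSet T)
    (h : ∀ᵐ p : ℝ × ℝ, volume {t : ℝ | (t, p.1, p.2) ∈ T} = 0) : volume T = 0 := by
  rw [vol3_eq_integral_tsections hT]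
  rw [lintegral_congr_ae (h.mono fun p hp => hp)]
  exact lintegral_zero

lemma null2_of_sections {T : Set (ℝ × ℝ)} (hT : MeasurableSet T)
    (h : ∀ᵐ y : ℝ, volume {x : ℝ | (x, y) ∈ T} = 0) : volume T = 0 := by
  rw [vol2_eq_integral_sections hT]
  rw [lintegral_congr_ae (h.mono fun p hp => hp)]
  exact lintegral_zero

end Sections

section NullQuadrics

lemma quad_solset_null (a b c d : ℝ) (h : a ≠ 0 ∨ b ≠ 0 ∨ c ≠ d) :
    volume {t : ℝ | a * t ^ 2 + b * t + c = d} = 0 := by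
  by_cases hab : a = 0 ∧ b = 0
  · have hcd : c ≠ d := by tauto
    have : {t : ℝ | a * t ^ 2 + b * t + c = d} = ∅ := by
      ext t
      simp only [Set.mem_setOf_eq, Set.mem_empty_iff_false, iff_false]
      rw [hab.1, hab.2]
      simpa using hcd
    simp [this]
  · set P : Polynomial ℝ :=
      Polynomial.C a * Polynomial.X ^ 2 + Polynomial.C b * Polynomial.X + Polynomial.C (c - d)
      with hP
    have hPne : P ≠ 0 := by
      intro hz
      have h2 : P.coeff 2 = a := by
        simp [hP, Polynomial.coeff_add, Polynomial.coeff_C_mul, Polynomial.coeff_X_pow,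
          Polynomial.coeff_C, Polynomial.coeff_X]
      have h1 : P.coeff 1 = b := by
        simp [hP, Polynomial.coeff_add, Polynomial.coeff_C_mul, Polynomial.coeff_X_pow,
          Polynomial.coeff_C, Polynomial.coeff_X]
      rw [hz] at h2 h1
      simp at h2 h1
      exact hab ⟨h2.symm, h1.symm⟩
    have hfin : {t : ℝ | a * t ^ 2 + b * t + c = d}.Finite := by
      apply Set.Finite.subset (Polynomial.finite_setOf_isRoot hPne)
      intro t ht
      simp only [Set.mem_setOf_eq] at ht ⊢
      show P.IsRoot t
      simp only [hP, Polynomial.IsRoot.def, Polynomial.eval_add, Polynomial.eval_mul,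
        Polynomial.eval_pow, Polynomial.eval_C, Polynomial.eval_X]
      linarith
    exact hfin.measure_zero _

lemma absq_null (a b c : ℝ) (h : a ≠ 0 ∨ b ≠ 0 ∨ |c| ≠ 1) :
    volume {t : ℝ | |a * t ^ 2 + b * t + c| = 1} = 0 := by
  have hsub : {t : ℝ | |a * t ^ 2 + b * t + c| = 1} ⊆
      {t : ℝ | a * t ^ 2 + b * t + c = 1} ∪ {t : ℝ | a * t ^ 2 + b * t + c = -1} := by
    intro t ht
    rcases (abs_eq (by norm_num : (0:ℝ) ≤ 1)).mp ht with h' | h'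
    · exact Or.inl h'
    · exact Or.inr h'
  refine measure_mono_null hsub (measure_union_null ?_ ?_)
  · refine quad_solset_null a b c 1 ?_
    rcases h with h | h | h
    · exact Or.inl h
    · exact Or.inr (Or.inl h)
    · refine Or.inr (Or.inr fun hc => h ?_)
      rw [hc]; norm_num
  · refine quad_solset_null a b c (-1) ?_
    rcases h with h | h | h
    · exact Or.inl h
    · exact Or.inr (Or.inl h)
    · refine Or.inr (Or.inr fun hc => h ?_)
      rw [hc]; norm_num

end NullQuadrics

section Boundaries

lemma null_snd_eq (c : ℝ) : volume {p : ℝ × ℝ | p.2 = c} = 0 := by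
  have h : {p : ℝ × ℝ | p.2 = c} = (Set.univ : Set ℝ) ×ˢ {c} := by
    ext ⟨x, y⟩
    simp [Set.mem_prod, eq_comm]
  rw [h, Measure.volume_eq_prod, Measure.prod_prod]
  simp

lemma ae_snd_ne (c : ℝ) : ∀ᵐ p : ℝ × ℝ, p.2 ≠ c := by
  have h := (MeasureTheory.measure_eq_zero_iff_ae_notMem (μ := volume)).mp (null_snd_eq c)
  exact h

def Bad : Set (ℝ × ℝ × ℝ) :=
  {q : ℝ × ℝ × ℝ | |q.1 * (q.2.2 * q.1 + q.2.1 ^ 2)| = 1} ∪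
  {q : ℝ × ℝ × ℝ | |q.2.2 * q.2.1 * q.1| = 1} ∪
  {q : ℝ × ℝ × ℝ | |q.2.2 * q.2.1 * q.1 + q.2.1 ^ 3| = 1} ∪
  {q : ℝ × ℝ × ℝ | |q.2.2 ^ 2 * q.1| = 1} ∪
  {q : ℝ × ℝ × ℝ | |q.2.2 ^ 2 * q.1 + q.2.2 * q.2.1 ^ 2| = 1} ∪
  {q : ℝ × ℝ × ℝ | q.2.2 = 1} ∪
  {q : ℝ × ℝ × ℝ | |q.2.2 ^ 2 * q.2.1| = 1}

lemma bad_null : volume Bad = 0 := by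
  unfold Bad
  refine measure_union_null (measure_union_null (measure_union_null (measure_union_null
    (measure_union_null (measure_union_null ?_ ?_) ?_) ?_) ?_) ?_) ?_
  · -- B1
    refine null3_of_tsections ?_ (Filter.Eventually.of_forall fun p => ?_)
    · have h : Measurable fun q : ℝ × ℝ × ℝ => |q.1 * (q.2.2 * q.1 + q.2.1 ^ 2)| := by fun_prop
      exact measurableSet_eq_fun h measurable_const
    · refine measure_mono_null ?_
        (absq_null p.2 (p.1 ^ 2) 0 (Or.inr (Or.inr (by norm_num))))
      intro t ht
      simp only [Set.mem_setOf_eq] at ht ⊢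
      rw [show p.2 * t ^ 2 + p.1 ^ 2 * t + 0 = t * (p.2 * t + p.1 ^ 2) from by ring]
      exact ht
  · -- B2
    refine null3_of_tsections ?_ (Filter.Eventually.of_forall fun p => ?_)
    · have h : Measurable fun q : ℝ × ℝ × ℝ => |q.2.2 * q.2.1 * q.1| := by fun_prop
      exact measurableSet_eq_fun h measurable_const
    · refine measure_mono_null ?_
        (absq_null 0 (p.2 * p.1) 0 (Or.inr (Or.inr (by norm_num))))
      intro t ht
      simp only [Set.mem_setOf_eq] at ht ⊢
      rw [show (0:ℝ) * t ^ 2 + p.2 * p.1 * t + 0 = p.2 * p.1 * t from by ring]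
      exact ht
  · -- B3
    refine null3_of_tsections ?_ ((ae_snd_ne 0).mono fun p hp => ?_)
    · have h : Measurable fun q : ℝ × ℝ × ℝ => |q.2.2 * q.2.1 * q.1 + q.2.1 ^ 3| := by fun_prop
      exact measurableSet_eq_fun h measurable_const
    · have hyp : (0:ℝ) ≠ 0 ∨ p.2 * p.1 ≠ 0 ∨ |p.1 ^ 3| ≠ 1 := by
        by_cases hv : p.1 = 0
        · refine Or.inr (Or.inr ?_)
          rw [hv]
          norm_num
        · exact Or.inr (Or.inl (mul_ne_zero hp hv))
      refine measure_mono_null ?_ (absq_null 0 (p.2 * p.1) (p.1 ^ 3) hyp)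
      intro t ht
      simp only [Set.mem_setOf_eq] at ht ⊢
      rw [show (0:ℝ) * t ^ 2 + p.2 * p.1 * t + p.1 ^ 3 = p.2 * p.1 * t + p.1 ^ 3 from by ring]
      exact ht
  · -- B4
    refine null3_of_tsections ?_ (Filter.Eventually.of_forall fun p => ?_)
    · have h : Measurable fun q : ℝ × ℝ × ℝ => |q.2.2 ^ 2 * q.1| := by fun_prop
      exact measurableSet_eq_fun h measurable_const
    · refine measure_mono_null ?_
        (absq_null 0 (p.2 ^ 2) 0 (Or.inr (Or.inr (by norm_num))))
      intro t ht
      simp only [Set.mem_setOf_eq] at ht ⊢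
      rw [show (0:ℝ) * t ^ 2 + p.2 ^ 2 * t + 0 = p.2 ^ 2 * t from by ring]
      exact ht
  · -- B5
    refine null3_of_tsections ?_ (Filter.Eventually.of_forall fun p => ?_)
    · have h : Measurable fun q : ℝ × ℝ × ℝ => |q.2.2 ^ 2 * q.1 + q.2.2 * q.2.1 ^ 2| := by
        fun_prop
      exact measurableSet_eq_fun h measurable_const
    · have hyp : (0:ℝ) ≠ 0 ∨ p.2 ^ 2 ≠ 0 ∨ |p.2 * p.1 ^ 2| ≠ 1 := by
        by_cases hu : p.2 = 0
        · refine Or.inr (Or.inr ?_)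
          rw [hu]
          norm_num
        · exact Or.inr (Or.inl (pow_ne_zero 2 hu))
      refine measure_mono_null ?_ (absq_null 0 (p.2 ^ 2) (p.2 * p.1 ^ 2) hyp)
      intro t ht
      simp only [Set.mem_setOf_eq] at ht ⊢
      rw [show (0:ℝ) * t ^ 2 + p.2 ^ 2 * t + p.2 * p.1 ^ 2
          = p.2 ^ 2 * t + p.2 * p.1 ^ 2 from by ring]
      exact ht
  · -- B6
    refine null3_of_tsections ?_ ((ae_snd_ne 1).mono fun p hp => ?_)
    · exact measurableSet_eq_fun (by fun_prop : Measurable fun q : ℝ × ℝ × ℝ => q.2.2)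
        measurable_const
    · have h : {t : ℝ | (t, p.1, p.2) ∈ {q : ℝ × ℝ × ℝ | q.2.2 = 1}} = (∅ : Set ℝ) := by
        ext t
        simp only [Set.mem_setOf_eq, Set.mem_empty_iff_false, iff_false]
        exact hp
      rw [h]
      exact measure_empty
  · -- B7
    have hC : volume {p : ℝ × ℝ | |p.2 ^ 2 * p.1| = 1} = 0 := by
      refine null2_of_sections ?_ (Filter.Eventually.of_forall fun y => ?_)
      · have h : Measurable fun p : ℝ × ℝ => |p.2 ^ 2 * p.1| := by fun_prop
        exact measurableSet_eq_fun h measurable_const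
      · refine measure_mono_null ?_
          (absq_null 0 (y ^ 2) 0 (Or.inr (Or.inr (by norm_num))))
        intro x hx
        simp only [Set.mem_setOf_eq] at hx ⊢
        rw [show (0:ℝ) * x ^ 2 + y ^ 2 * x + 0 = y ^ 2 * x from by ring]
        exact hx
    have hae : ∀ᵐ p : ℝ × ℝ, ¬ |p.2 ^ 2 * p.1| = 1 :=
      (MeasureTheory.measure_eq_zero_iff_ae_notMem (μ := volume)).mp hC
    refine null3_of_tsections ?_ (hae.mono fun p hp => ?_)
    · have h : Measurable fun q : ℝ × ℝ × ℝ => |q.2.2 ^ 2 * q.2.1| := by fun_prop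
      exact measurableSet_eq_fun h measurable_const
    · have h : {t : ℝ | (t, p.1, p.2) ∈ {q : ℝ × ℝ × ℝ | |q.2.2 ^ 2 * q.2.1| = 1}}
          = (∅ : Set ℝ) := by
        ext t
        simp only [Set.mem_setOf_eq, Set.mem_empty_iff_false, iff_false]
        exact hp
      rw [h]
      exact measure_empty

lemma cube_pos_iff (u : ℝ) : 0 < u ^ 3 ↔ 0 < u := by
  constructor
  · intro h
    by_contra hu
    push_neg at hu
    nlinarith [sq_nonneg u]
  · intro h; positivity

lemma vol_S_eq_vol_Slt : volume S = volume Slt := by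
  have hdiff : S \ Bad = Slt := by
    ext q
    simp only [Set.mem_diff, S, Slt, Bad, Set.mem_setOf_eq, Set.mem_union]
    constructor
    · rintro ⟨⟨h1, h2, h3, h4, h5, h6, h7, h8, h9⟩, hb⟩
      push_neg at hb
      obtain ⟨⟨⟨⟨⟨⟨b1, b2⟩, b3⟩, b4⟩, b5⟩, b6⟩, b7⟩ := hb
      have hu : 0 < q.2.2 := (cube_pos_iff _).mp h7
      refine ⟨by rwa [abs_pos] at h1, lt_of_le_of_ne h2 b1, lt_of_le_of_ne h3 b2,
        lt_of_le_of_ne h4 b3, lt_of_le_of_ne h5 b4, lt_of_le_of_ne h6 b5, hu, ?_,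
        lt_of_le_of_ne h9 b7⟩
      rcases lt_or_eq_of_le (show q.2.2 ≤ 1 from by nlinarith) with h | h
      · exact h
      · exact absurd h b6
    · rintro ⟨h1, h2, h3, h4, h5, h6, h7, h8, h9⟩
      refine ⟨⟨abs_pos.mpr h1, le_of_lt h2, le_of_lt h3, le_of_lt h4, le_of_lt h5, le_of_lt h6,
        by positivity, by nlinarith, le_of_lt h9⟩, ?_⟩
      push_neg
      exact ⟨⟨⟨⟨⟨⟨ne_of_lt h2, ne_of_lt h3⟩, ne_of_lt h4⟩, ne_of_lt h5⟩, ne_of_lt h6⟩,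
        ne_of_lt h8⟩, ne_of_lt h9⟩
  rw [← hdiff]
  exact (measure_diff_null bad_null).symm

end Boundaries

section PartTwo

def Hsec (u : ℝ) : ℝ≥0∞ := volume {p : ℝ × ℝ | (p.1, p.2, u) ∈ S}

lemma measurableSet_secS (u : ℝ) : MeasurableSet {p : ℝ × ℝ | (p.1, p.2, u) ∈ S} := by
  have h : {p : ℝ × ℝ | (p.1, p.2, u) ∈ S} = (fun p : ℝ × ℝ => (p.1, p.2, u)) ⁻¹' S := rfl
  rw [h]
  exact measurableSet_S.preimage (by fun_prop)

lemma measurable_Hsec : Measurable Hsec := by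
  have hT : MeasurableSet (MeasurableEquiv.prodAssoc ⁻¹' S : Set ((ℝ × ℝ) × ℝ)) :=
    MeasurableEquiv.prodAssoc.measurable measurableSet_S
  exact measurable_measure_prodMk_right (μ := (volume : Measure (ℝ × ℝ))) hT

lemma Hsec_zero {u : ℝ} (hu : u ∉ Set.Ioc (0:ℝ) 1) : Hsec u = 0 := by
  unfold Hsec
  have h : {p : ℝ × ℝ | (p.1, p.2, u) ∈ S} = ∅ := by
    ext p
    simp only [S, Set.mem_setOf_eq, Set.mem_empty_iff_false, iff_false]
    intro h
    obtain ⟨-, -, -, -, -, -, h7, h8, -⟩ := h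
    have hup : 0 < u := (cube_pos_iff u).mp h7
    refine hu ⟨hup, ?_⟩
    by_contra hle
    push_neg at hle
    have : 1 < u ^ 3 := one_lt_pow₀ hle (by norm_num)
    linarith
  rw [h, measure_empty]

lemma mem_Icc_of_abs_sq_mul {u x : ℝ} (hu : 0 < u) (h : |u ^ 2 * x| ≤ 1) :
    x ∈ Set.Icc (-(1 / u ^ 2)) (1 / u ^ 2) := by
  rw [abs_mul, abs_of_pos (pow_pos hu 2)] at h
  have hx : |x| ≤ 1 / u ^ 2 := by
    rw [le_div_iff₀ (by positivity : (0:ℝ) < u ^ 2)]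
    linarith
  exact abs_le.mp hx

lemma abs_sq_mul_le {u x : ℝ} (hu : 0 < u) (h : x ∈ Set.Icc (-(1 / u ^ 2)) (1 / u ^ 2)) :
    |u ^ 2 * x| ≤ 1 := by
  rw [abs_mul, abs_of_pos (pow_pos hu 2)]
  have hx : |x| ≤ 1 / u ^ 2 := abs_le.mpr h
  calc u ^ 2 * |x| ≤ u ^ 2 * (1 / u ^ 2) := by
        exact mul_le_mul_of_nonneg_left hx (by positivity)
  _ = 1 := by field_simp

lemma Hsec_lt_top {u : ℝ} (hu : 0 < u) : Hsec u < ⊤ := by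
  have hsub : {p : ℝ × ℝ | (p.1, p.2, u) ∈ S} ⊆
      Set.Icc (-(1 / u ^ 2)) (1 / u ^ 2) ×ˢ Set.Icc (-(1 / u ^ 2)) (1 / u ^ 2) := by
    rintro p ⟨-, -, -, -, h5, -, -, -, h9⟩
    exact ⟨mem_Icc_of_abs_sq_mul hu h5, mem_Icc_of_abs_sq_mul hu h9⟩
  refine lt_of_le_of_lt (measure_mono hsub) ?_
  rw [Measure.volume_eq_prod, Measure.prod_prod, Real.volume_Icc]
  exact ENNReal.mul_lt_top ENNReal.ofReal_lt_top ENNReal.ofReal_lt_top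

lemma Tset_vol_lt_top {u : ℝ} (hu : 0 < u) (v : ℝ) : volume (Tset u v) < ⊤ := by
  have hsub : Tset u v ⊆ Set.Icc (-(1 / u ^ 2)) (1 / u ^ 2) := by
    rintro t ⟨-, -, -, -, h5, -⟩
    exact mem_Icc_of_abs_sq_mul hu h5
  refine lt_of_le_of_lt (measure_mono hsub) ?_
  rw [Real.volume_Icc]
  exact ENNReal.ofReal_lt_top

lemma Tset_neg (u v : ℝ) : Tset u (-v) = Tset u v := by
  ext t
  simp only [Tset, Set.mem_setOf_eq]
  rw [show t * (u * t + (-v) ^ 2) = t * (u * t + v ^ 2) from by ring,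
    show u * -v * t + (-v) ^ 3 = -(u * v * t + v ^ 3) from by ring,
    show u * -v * t = -(u * v * t) from by ring,
    show u ^ 2 * t + u * (-v) ^ 2 = u ^ 2 * t + u * v ^ 2 from by ring,
    abs_neg, abs_neg]

lemma measurable_Tset_vol (u : ℝ) : Measurable fun v => volume (Tset u v) := by
  have hQ : MeasurableSet {w : ℝ × ℝ |
      0 < |w.2 * (u * w.2 + w.1 ^ 2)| ∧ |w.2 * (u * w.2 + w.1 ^ 2)| ≤ 1 ∧
      |u * w.1 * w.2| ≤ 1 ∧ |u * w.1 * w.2 + w.1 ^ 3| ≤ 1 ∧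
      |u ^ 2 * w.2| ≤ 1 ∧ |u ^ 2 * w.2 + u * w.1 ^ 2| ≤ 1} := by
    have h1 : Measurable fun w : ℝ × ℝ => |w.2 * (u * w.2 + w.1 ^ 2)| := by fun_prop
    have h2 : Measurable fun w : ℝ × ℝ => |u * w.1 * w.2| := by fun_prop
    have h3 : Measurable fun w : ℝ × ℝ => |u * w.1 * w.2 + w.1 ^ 3| := by fun_prop
    have h4 : Measurable fun w : ℝ × ℝ => |u ^ 2 * w.2| := by fun_prop
    have h5 : Measurable fun w : ℝ × ℝ => |u ^ 2 * w.2 + u * w.1 ^ 2| := by fun_prop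
    simp only [Set.setOf_and]
    exact (measurableSet_lt measurable_const h1).inter
      ((measurableSet_le h1 measurable_const).inter
      ((measurableSet_le h2 measurable_const).inter
      ((measurableSet_le h3 measurable_const).inter
      ((measurableSet_le h4 measurable_const).inter
      (measurableSet_le h5 measurable_const)))))
  exact measurable_measure_prodMk_left (ν := (volume : Measure ℝ)) hQ

lemma sec_vol {u : ℝ} (hu : u ∈ Set.Ioc (0:ℝ) 1) :
    Hsec u = 2 * ∫⁻ v in Set.Ioc (0:ℝ) (1 / u ^ 2), volume (Tset u v) := by
  have hc : (0:ℝ) ≤ 1 / u ^ 2 := by positivity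
  have h1 : Hsec u = ∫⁻ v : ℝ, volume {t : ℝ | (t, v, u) ∈ S} :=
    vol2_eq_integral_sections (measurableSet_secS u)
  have h2 : ∀ v : ℝ, volume {t : ℝ | (t, v, u) ∈ S}
      = (Set.Icc (-(1 / u ^ 2)) (1 / u ^ 2)).indicator (fun v => volume (Tset u v)) v := by
    intro v
    by_cases hv : v ∈ Set.Icc (-(1 / u ^ 2)) (1 / u ^ 2)
    · rw [Set.indicator_of_mem hv]
      congr 1
      ext t
      simp only [S, Tset, Set.mem_setOf_eq]
      have hx1 : 0 < u ^ 3 := pow_pos hu.1 3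
      have hx2 : u ^ 3 ≤ 1 := pow_le_one₀ hu.1.le hu.2
      have hx3 : |u ^ 2 * v| ≤ 1 := abs_sq_mul_le hu.1 hv
      tauto
    · rw [Set.indicator_of_notMem hv]
      have hempty : {t : ℝ | (t, v, u) ∈ S} = ∅ := by
        ext t
        simp only [S, Set.mem_setOf_eq, Set.mem_empty_iff_false, iff_false]
        intro h
        exact hv (mem_Icc_of_abs_sq_mul hu.1 h.2.2.2.2.2.2.2.2)
      rw [hempty, measure_empty]
  rw [h1, lintegral_congr h2, lintegral_indicator measurableSet_Icc]
  have hsplit : Set.Icc (-(1 / u ^ 2)) (1 / u ^ 2)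
      = Set.Icc (-(1 / u ^ 2)) 0 ∪ Set.Ioc 0 (1 / u ^ 2) :=
    (Set.Icc_union_Ioc_eq_Icc (by linarith : -(1 / u ^ 2) ≤ 0) hc).symm
  have hdisj : Disjoint (Set.Icc (-(1 / u ^ 2)) (0:ℝ)) (Set.Ioc (0:ℝ) (1 / u ^ 2)) := by
    rw [Set.disjoint_left]
    rintro x ⟨-, hx2⟩ ⟨hx3, -⟩
    linarith
  rw [hsplit, lintegral_union measurableSet_Ioc hdisj]
  have hneg : ∫⁻ v in Set.Icc (-(1 / u ^ 2)) 0, volume (Tset u v)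
      = ∫⁻ v in Set.Ioc (0:ℝ) (1 / u ^ 2), volume (Tset u v) := by
    have hmp : MeasurePreserving (fun x : ℝ => -x) volume volume :=
      Measure.measurePreserving_neg _
    have hemb : MeasurableEmbedding (fun x : ℝ => -x) :=
      (Homeomorph.neg ℝ).measurableEmbedding
    have himg : (fun x : ℝ => -x) '' Set.Icc 0 (1 / u ^ 2) = Set.Icc (-(1 / u ^ 2)) 0 := by
      ext x
      simp only [Set.mem_image, Set.mem_Icc]
      constructor
      · rintro ⟨y, ⟨hy1, hy2⟩, rfl⟩
        constructor <;> linarith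
      · rintro ⟨hx1, hx2⟩
        exact ⟨-x, ⟨by linarith, by linarith⟩, by ring⟩
    have hcv := hmp.setLIntegral_comp_emb hemb (fun v => volume (Tset u v))
      (Set.Icc 0 (1 / u ^ 2))
    rw [himg] at hcv
    rw [← hcv, lintegral_congr fun x => by rw [Tset_neg],
      ← Measure.restrict_congr_set MeasureTheory.Ioc_ae_eq_Icc]
  rw [hneg, two_mul]

lemma F2_eq {u : ℝ} (hu : u ∈ Set.Ioc (0:ℝ) 1) :
    F2 u = (∫⁻ v in Set.Ioc (0:ℝ) (1 / u ^ 2), volume (Tset u v)).toReal := by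
  have hc : (0:ℝ) ≤ 1 / u ^ 2 := by positivity
  rw [F2, intervalIntegral.integral_of_le hc]
  simp only [F1_eq]
  exact integral_toReal ((measurable_Tset_vol u).aemeasurable)
    (Filter.Eventually.of_forall fun v => Tset_vol_lt_top hu.1 v)

lemma vol_S_eq : volume S = ∫⁻ u in Set.Ioc (0:ℝ) 1, Hsec u := by
  rw [vol3_eq_integral_sections measurableSet_S]
  have h : ∀ u : ℝ, volume {p : ℝ × ℝ | (p.1, p.2, u) ∈ S}
      = (Set.Ioc (0:ℝ) 1).indicator Hsec u := by
    intro u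
    by_cases hu : u ∈ Set.Ioc (0:ℝ) 1
    · rw [Set.indicator_of_mem hu]
      rfl
    · rw [Set.indicator_of_notMem hu]
      exact Hsec_zero hu
  rw [lintegral_congr h, lintegral_indicator measurableSet_Ioc]

lemma part_two : 3 * (volume S).toReal = 6 * ∫ u in (0:ℝ)..1, F2 u := by
  have hF2 : Set.EqOn F2 (fun u => (Hsec u).toReal / 2) (Set.Ioc (0:ℝ) 1) := by
    intro u hu
    have h : (Hsec u).toReal
        = 2 * (∫⁻ v in Set.Ioc (0:ℝ) (1 / u ^ 2), volume (Tset u v)).toReal := by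
      rw [sec_vol hu, ENNReal.toReal_mul]
      norm_num
    show F2 u = (Hsec u).toReal / 2
    rw [F2_eq hu, h]
    ring
  rw [intervalIntegral.integral_of_le zero_le_one,
    setIntegral_congr_fun measurableSet_Ioc hF2, integral_div,
    integral_toReal measurable_Hsec.aemeasurable
      ((ae_restrict_iff' measurableSet_Ioc).mpr
        (Filter.Eventually.of_forall fun u hu => Hsec_lt_top hu.1)),
    ← vol_S_eq]
  ring

end PartTwo

section PartOne

lemma Mf_pos (p : ℝ × ℝ) : 0 < Mf p :=
  lt_of_lt_of_le one_pos (le_trans (le_max_right _ 1) (le_max_left _ _))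

lemma Mf_continuous : Continuous Mf := by
  unfold Mf
  fun_prop

lemma layercake : ∫⁻ p : ℝ × ℝ, ENNReal.ofReal ((Mf p)⁻¹)
    = ∫⁻ s in Set.Ioi (0:ℝ), volume {p : ℝ × ℝ | s < (Mf p)⁻¹} :=
  lintegral_eq_lintegral_meas_lt volume
    (Filter.Eventually.of_forall fun p => inv_nonneg.mpr (Mf_pos p).le)
    (Mf_continuous.inv₀ fun p => (Mf_pos p).ne').aemeasurable

lemma Z_null : volume Z = 0 := by
  refine null2_of_sections measurableSet_Z (Filter.Eventually.of_forall fun y => ?_)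
  refine measure_mono_null ?_ (quad_solset_null 1 (y ^ 2) 0 0 (Or.inl one_ne_zero))
  intro x hx
  simp only [Z, Set.mem_setOf_eq] at hx ⊢
  linear_combination hx

lemma slice_eq {s : ℝ} (hs : 0 < s) : {p : ℝ × ℝ | s < (Mf p)⁻¹} = A0 s := by
  ext p
  rw [Set.mem_setOf_eq, ← one_div, lt_div_iff₀ (Mf_pos p)]
  show s * Mf p < 1 ↔ _
  unfold Mf A0
  rw [Set.mem_setOf_eq]
  simp only [mul_max_of_nonneg _ _ hs.le, max_lt_iff]

lemma vol_slice {s : ℝ} (hs : 0 < s) :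
    volume {p : ℝ × ℝ | s < (Mf p)⁻¹} = volume (Aset s) := by
  rw [slice_eq hs]
  exact (measure_diff_null Z_null).symm

lemma ioi_to_ioo : ∫⁻ s in Set.Ioi (0:ℝ), volume (Aset s)
    = ∫⁻ s in Set.Ioo (0:ℝ) 1, volume (Aset s) := by
  rw [← Set.Ioo_union_Ici_eq_Ioi (zero_lt_one (α := ℝ))]
  have hdisj : Disjoint (Set.Ioo (0:ℝ) 1) (Set.Ici (1:ℝ)) := by
    rw [Set.disjoint_left]
    rintro x ⟨-, hx2⟩ hx3
    exact absurd hx3 (not_le.mpr hx2)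
  rw [lintegral_union measurableSet_Ici hdisj]
  have h0 : ∫⁻ s in Set.Ici (1:ℝ), volume (Aset s) = 0 := by
    have hz : ∀ s ∈ Set.Ici (1:ℝ), volume (Aset s) = (fun _ => (0:ℝ≥0∞)) s := by
      intro s hs
      have hempty : Aset s = ∅ := by
        ext p
        simp only [Aset, A0, Set.mem_diff, Set.mem_setOf_eq, Set.mem_empty_iff_false, iff_false]
        rintro ⟨⟨⟨-, h6⟩, -⟩, -⟩
        rw [mul_one] at h6
        exact absurd hs (not_le.mpr h6)
      rw [hempty, measure_empty]
    rw [setLIntegral_congr_fun measurableSet_Ici (fun x hx => hz x hx),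
      lintegral_zero]
  rw [h0, add_zero]

lemma cov : ∫⁻ s in Set.Ioo (0:ℝ) 1, volume (Aset s)
    = ∫⁻ u in Set.Ioo (0:ℝ) 1, ENNReal.ofReal |3 * u ^ 2| * volume (Aset (u ^ 3)) := by
  have himg : (fun x : ℝ => x ^ 3) '' Set.Ioo 0 1 = Set.Ioo 0 1 := by
    ext y
    simp only [Set.mem_image, Set.mem_Ioo]
    constructor
    · rintro ⟨x, ⟨hx0, hx1⟩, rfl⟩
      exact ⟨by positivity, pow_lt_one₀ hx0.le hx1 (by norm_num)⟩
    · rintro ⟨hy0, hy1⟩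
      refine ⟨y ^ ((3:ℝ)⁻¹), ⟨by positivity, ?_⟩, ?_⟩
      · exact Real.rpow_lt_one hy0.le hy1 (by norm_num)
      · rw [show ((3:ℝ)⁻¹) = ((3:ℕ) : ℝ)⁻¹ from by norm_num]
        exact Real.rpow_inv_natCast_pow hy0.le (by norm_num)
  have hderiv : ∀ x ∈ Set.Ioo (0:ℝ) 1, HasDerivWithinAt (fun x : ℝ => x ^ 3)
      (3 * x ^ 2) (Set.Ioo 0 1) x := by
    intro x _
    have h := (hasDerivAt_pow 3 x).hasDerivWithinAt (s := Set.Ioo (0:ℝ) 1)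
    norm_num at h
    exact h
  have hinj : Set.InjOn (fun x : ℝ => x ^ 3) (Set.Ioo 0 1) := by
    intro a ha b hb h
    simp only at h
    have h2 : 0 < a ^ 2 + a * b + b ^ 2 := by nlinarith [ha.1, hb.1, mul_pos ha.1 hb.1]
    have h3 : (a - b) * (a ^ 2 + a * b + b ^ 2) = 0 := by linear_combination h
    rcases mul_eq_zero.mp h3 with h4 | h4
    · linarith
    · linarith
  have hcv := lintegral_image_eq_lintegral_abs_det_fderiv_mul volume measurableSet_Ioo
    (fun x hx => (hderiv x hx).hasFDerivWithinAt) hinj (fun s => volume (Aset s))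
  rw [himg] at hcv
  rw [hcv]
  apply lintegral_congr
  intro x
  rw [ContinuousLinearMap.det_toSpanSingleton]

lemma mem_Aset_smul {u : ℝ} (hu : 0 < u) (t v : ℝ) :
    (u⁻¹ * t, u⁻¹ * v) ∈ Aset (u ^ 3) ↔
      (t * (u * t + v ^ 2) ≠ 0 ∧ |t * (u * t + v ^ 2)| < 1 ∧ |u * v * t| < 1 ∧
       |u * v * t + v ^ 3| < 1 ∧ |u ^ 2 * t| < 1 ∧ |u ^ 2 * t + u * v ^ 2| < 1 ∧
       u ^ 3 < 1 ∧ |u ^ 2 * v| < 1) := by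
  have hu3 : (0:ℝ) < u ^ 3 := by positivity
  have hune : u ≠ 0 := hu.ne'
  have habs : ∀ X Y : ℝ, u ^ 3 * X = Y → (u ^ 3 * |X| < 1 ↔ |Y| < 1) := by
    intro X Y h
    rw [← h, abs_mul, abs_of_pos hu3]
  have e1 : u ^ 3 * ((u⁻¹ * t) ^ 2 + (u⁻¹ * t) * (u⁻¹ * v) ^ 2) = t * (u * t + v ^ 2) := by
    field_simp
  have e2 : u ^ 3 * ((u⁻¹ * t) * (u⁻¹ * v)) = u * v * t := by
    field_simp
  have e3 : u ^ 3 * ((u⁻¹ * t) * (u⁻¹ * v) + (u⁻¹ * v) ^ 3) = u * v * t + v ^ 3 := by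
    field_simp
  have e4 : u ^ 3 * (u⁻¹ * t) = u ^ 2 * t := by
    field_simp
  have e5 : u ^ 3 * (u⁻¹ * t + (u⁻¹ * v) ^ 2) = u ^ 2 * t + u * v ^ 2 := by
    field_simp
  have e7 : u ^ 3 * (u⁻¹ * v) = u ^ 2 * v := by
    field_simp
  have eZ0 : u ^ 3 * ((u⁻¹ * t) * (u⁻¹ * t + (u⁻¹ * v) ^ 2)) = t * (u * t + v ^ 2) := by
    field_simp
  have eZ : ¬ (u⁻¹ * t) * (u⁻¹ * t + (u⁻¹ * v) ^ 2) = 0 ↔ ¬ t * (u * t + v ^ 2) = 0 := by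
    constructor
    · intro h hX
      apply h
      have h2 : u ^ 3 * ((u⁻¹ * t) * (u⁻¹ * t + (u⁻¹ * v) ^ 2)) = 0 := by rw [eZ0, hX]
      rcases mul_eq_zero.mp h2 with h3 | h3
      · exact absurd h3 (by positivity)
      · exact h3
    · intro h hX
      apply h
      rw [← eZ0, hX, mul_zero]
  simp only [Aset, A0, Z, Set.mem_diff, Set.mem_setOf_eq]
  rw [habs _ _ e1, habs _ _ e2, habs _ _ e3, habs _ _ e4, habs _ _ e5, habs _ _ e7,
    mul_one, eZ]
  tauto

lemma sec_Slt_eq {u : ℝ} (hu : u ∈ Set.Ioo (0:ℝ) 1) :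
    {p : ℝ × ℝ | (p.1, p.2, u) ∈ Slt} = u • Aset (u ^ 3) := by
  have h1 : u ^ 3 < 1 := pow_lt_one₀ hu.1.le hu.2 (by norm_num)
  ext ⟨t, v⟩
  rw [Set.mem_setOf_eq, Set.mem_smul_set_iff_inv_smul_mem₀ hu.1.ne',
    show u⁻¹ • ((t, v) : ℝ × ℝ) = (u⁻¹ * t, u⁻¹ * v) from rfl,
    mem_Aset_smul hu.1 t v]
  simp only [Slt, Set.mem_setOf_eq]
  constructor
  · rintro ⟨a1, a2, a3, a4, a5, a6, -, -, a9⟩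
    exact ⟨a1, a2, a3, a4, a5, a6, h1, a9⟩
  · rintro ⟨a1, a2, a3, a4, a5, a6, -, a9⟩
    exact ⟨a1, a2, a3, a4, a5, a6, hu.1, hu.2, a9⟩

lemma vol_smul (u : ℝ) (s : Set (ℝ × ℝ)) :
    volume (u • s) = ENNReal.ofReal |u ^ 2| * volume s := by
  rw [Measure.addHaar_smul]
  congr 2
  norm_num

lemma sec_Slt_zero {u : ℝ} (hu : u ∉ Set.Ioo (0:ℝ) 1) :
    volume {p : ℝ × ℝ | (p.1, p.2, u) ∈ Slt} = 0 := by
  have h : {p : ℝ × ℝ | (p.1, p.2, u) ∈ Slt} = ∅ := by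
    ext p
    simp only [Slt, Set.mem_setOf_eq, Set.mem_empty_iff_false, iff_false]
    rintro ⟨-, -, -, -, -, -, h7, h8, -⟩
    exact hu ⟨h7, h8⟩
  rw [h, measure_empty]

lemma lint_eq : ∫⁻ p : ℝ × ℝ, ENNReal.ofReal ((Mf p)⁻¹) = 3 * volume S := by
  rw [layercake,
    setLIntegral_congr_fun measurableSet_Ioi
      (fun s hs => vol_slice hs),
    ioi_to_ioo, cov]
  have hpt : ∀ u ∈ Set.Ioo (0:ℝ) 1, ENNReal.ofReal |3 * u ^ 2| * volume (Aset (u ^ 3))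
      = 3 * volume {p : ℝ × ℝ | (p.1, p.2, u) ∈ Slt} := by
    intro u hu
    rw [sec_Slt_eq hu, vol_smul, ← mul_assoc]
    congr 1
    rw [show |3 * u ^ 2| = 3 * |u ^ 2| from by rw [abs_mul]; norm_num,
      ENNReal.ofReal_mul (by norm_num : (0:ℝ) ≤ 3)]
    norm_num
  rw [setLIntegral_congr_fun measurableSet_Ioo (fun x hx => hpt x hx),
    lintegral_const_mul' 3 _ (by norm_num : (3:ℝ≥0∞) ≠ ⊤)]
  congr 1
  have hsec : ∫⁻ u in Set.Ioo (0:ℝ) 1, volume {p : ℝ × ℝ | (p.1, p.2, u) ∈ Slt}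
      = volume Slt := by
    rw [vol3_eq_integral_sections measurableSet_Slt]
    have h : ∀ u : ℝ, volume {p : ℝ × ℝ | (p.1, p.2, u) ∈ Slt}
        = (Set.Ioo (0:ℝ) 1).indicator (fun u => volume {p : ℝ × ℝ | (p.1, p.2, u) ∈ Slt}) u := by
      intro u
      by_cases hu : u ∈ Set.Ioo (0:ℝ) 1
      · rw [Set.indicator_of_mem hu]
      · rw [Set.indicator_of_notMem hu]
        exact sec_Slt_zero hu
    conv_rhs => rw [lintegral_congr h]
    rw [lintegral_indicator measurableSet_Ioo]
  rw [hsec, ← vol_S_eq_vol_Slt]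

lemma part_one : (∫ p : ℝ × ℝ, (Mf p)⁻¹) = 3 * (volume S).toReal := by
  rw [integral_eq_lintegral_of_nonneg_ae
      (Filter.Eventually.of_forall fun p => inv_nonneg.mpr (Mf_pos p).le)
      (Continuous.aestronglyMeasurable (Mf_continuous.inv₀ fun p => (Mf_pos p).ne')),
    lint_eq, ENNReal.toReal_mul]
  norm_num

end PartOne

end DensityAux

/-- The real density expressed in three ways; coordinates on `ℝ³` are `q = (t, v, u)`. -/
theorem real_density_integral_identities :
    (∫ p : ℝ × ℝ,
        (max (max (max (max (max (max |p.1 ^ 2 + p.1 * p.2 ^ 2| |p.1 * p.2|)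
          |p.1 * p.2 + p.2 ^ 3|) |p.1|) |p.1 + p.2 ^ 2|) 1) |p.2|)⁻¹)
      = 3 * (volume {q : ℝ × ℝ × ℝ |
          0 < |q.1 * (q.2.2 * q.1 + q.2.1 ^ 2)| ∧ |q.1 * (q.2.2 * q.1 + q.2.1 ^ 2)| ≤ 1 ∧
          |q.2.2 * q.2.1 * q.1| ≤ 1 ∧ |q.2.2 * q.2.1 * q.1 + q.2.1 ^ 3| ≤ 1 ∧
          |q.2.2 ^ 2 * q.1| ≤ 1 ∧ |q.2.2 ^ 2 * q.1 + q.2.2 * q.2.1 ^ 2| ≤ 1 ∧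
          0 < q.2.2 ^ 3 ∧ q.2.2 ^ 3 ≤ 1 ∧ |q.2.2 ^ 2 * q.2.1| ≤ 1}).toReal ∧
    3 * (volume {q : ℝ × ℝ × ℝ |
          0 < |q.1 * (q.2.2 * q.1 + q.2.1 ^ 2)| ∧ |q.1 * (q.2.2 * q.1 + q.2.1 ^ 2)| ≤ 1 ∧
          |q.2.2 * q.2.1 * q.1| ≤ 1 ∧ |q.2.2 * q.2.1 * q.1 + q.2.1 ^ 3| ≤ 1 ∧
          |q.2.2 ^ 2 * q.1| ≤ 1 ∧ |q.2.2 ^ 2 * q.1 + q.2.2 * q.2.1 ^ 2| ≤ 1 ∧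
          0 < q.2.2 ^ 3 ∧ q.2.2 ^ 3 ≤ 1 ∧ |q.2.2 ^ 2 * q.2.1| ≤ 1}).toReal
      = 6 * ∫ u in (0:ℝ)..1, F2 u := by
  constructor
  · exact DensityAux.part_one
  · exact DensityAux.part_two
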